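/- Let q = 2^m with m ≥ 2 and let β ∈ F_q with β ∉ {0,1}. Then |β² T₀* ∩ T₀*| = q/4 - 1, where T₀* = {x ∈ F_q^* : Tr(x) = 0}. -/

import Mathlib

private lemma zmod2_key : ∀ a b c : ZMod 2 × ZMod 2, a.1 + a.2 = 1 → b.1 = 1 → c.2 = 1 →
    ∀ s t : ZMod 2, ∃ x y z : ZMod 2, x • a + y • b + z • c = (s, t) := by decide

/-- For `q = 2^m`, `m ≥ 2`, and `β ∉ {0,1}`, one has `|β²T₀* ∩ T₀*| = q/4 - 1`. -/
theorem card_beta_sq_T0_inter_T0 (m : ℕ) (hm : 2 ≤ m)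
    (F : Type*) [Field F] [Fintype F] [Algebra (ZMod 2) F] (hcard : Fintype.card F = 2 ^ m)
    (β : F) (hβ0 : β ≠ 0) (hβ1 : β ≠ 1) :
    Nat.card (((fun x => β ^ 2 * x) '' {x : F | x ≠ 0 ∧ Algebra.trace (ZMod 2) F x = 0}) ∩
        {x : F | x ≠ 0 ∧ Algebra.trace (ZMod 2) F x = 0} : Set F) = 2 ^ m / 4 - 1 := by
  classical
  haveI : CharP F 2 := charP_of_injective_algebraMap (algebraMap (ZMod 2) F).injective 2
  have hβsq : (β ^ 2 : F) ≠ 0 := pow_ne_zero _ hβ0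
  set c : F := (β ^ 2)⁻¹ with hc
  have hc0 : c ≠ 0 := inv_ne_zero hβsq
  have hc1 : c ≠ 1 := by
    intro h
    apply hβ1
    have hb2 : β ^ 2 = 1 := by rwa [hc, inv_eq_one] at h
    have : (β - 1) ^ 2 = 0 := by
      have h2 : (2 : F) = 0 := by exact_mod_cast CharP.cast_eq_zero F 2
      linear_combination hb2 + (1 - β) * h2
    have := pow_eq_zero_iff (n := 2) (by norm_num) |>.mp this
    linear_combination this
  have hnd := (traceForm_nondegenerate (ZMod 2) F).1
  set T : F →ₗ[ZMod 2] ZMod 2 := Algebra.trace (ZMod 2) F with hT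
  -- the linear map φ y = (Tr y, Tr (c * y))
  set φ : F →ₗ[ZMod 2] ZMod 2 × ZMod 2 :=
    LinearMap.prod T (T ∘ₗ LinearMap.mulLeft (ZMod 2) c) with hφ
  have hφapp : ∀ y : F, φ y = (T y, T (c * y)) := fun y => rfl
  -- nondegeneracy consequences
  have h1 : ∃ b : F, T b ≠ 0 := by
    by_contra h; push_neg at h
    exact one_ne_zero (hnd 1 (fun b => by simpa [Algebra.traceForm_apply] using h (1 * b)))
  have h2 : ∃ b : F, T (c * b) ≠ 0 := by
    by_contra h; push_neg at h
    exact hc0 (hnd c (fun b => by simpa [Algebra.traceForm_apply] using h b))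
  have h3 : ∃ w : F, T w ≠ T (c * w) := by
    by_contra h; push_neg at h
    have h0 : (1 + c : F) = 0 := by
      refine hnd _ (fun w => ?_)
      have : T w + T (c * w) = 0 := by
        rw [← h w]; exact CharTwo.add_self_eq_zero _
      simpa [Algebra.traceForm_apply, add_mul, map_add] using this
    have hcm : c = -1 := by linear_combination h0
    rw [CharTwo.neg_eq] at hcm
    exact hc1 hcm
  obtain ⟨u, hu⟩ := h1
  obtain ⟨v, hv⟩ := h2
  obtain ⟨w, hw⟩ := h3
  have zmod2_ne : ∀ x y : ZMod 2, x ≠ y → x + y = 1 := by decide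
  have zmod2_ne0 : ∀ x : ZMod 2, x ≠ 0 → x = 1 := by decide
  have hsurj : Function.Surjective φ := by
    intro p
    obtain ⟨x, y, z, hxyz⟩ := zmod2_key (φ w) (φ u) (φ v)
      (by rw [hφapp]; exact zmod2_ne _ _ hw)
      (by rw [hφapp]; exact zmod2_ne0 _ hu)
      (by rw [hφapp]; exact zmod2_ne0 _ hv) p.1 p.2
    exact ⟨x • w + y • u + z • v, by simp only [map_add, map_smul, hxyz]⟩
  -- set identification
  have hset : (((fun x => β ^ 2 * x) '' {x : F | x ≠ 0 ∧ Algebra.trace (ZMod 2) F x = 0}) ∩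
      {x : F | x ≠ 0 ∧ Algebra.trace (ZMod 2) F x = 0} : Set F)
      = (LinearMap.ker φ : Set F) \ {0} := by
    ext y
    simp only [Set.mem_inter_iff, Set.mem_image, Set.mem_setOf_eq, Set.mem_diff,
      SetLike.mem_coe, LinearMap.mem_ker, Set.mem_singleton_iff, hφapp, Prod.mk_eq_zero]
    constructor
    · rintro ⟨⟨x, ⟨hx0, hxtr⟩, rfl⟩, hy0, hytr⟩
      refine ⟨⟨hytr, ?_⟩, hy0⟩
      rw [hc, inv_mul_cancel_left₀ hβsq]
      exact hxtr
    · rintro ⟨⟨hytr, hctr⟩, hy0⟩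
      refine ⟨⟨c * y, ⟨mul_ne_zero hc0 hy0, hctr⟩, ?_⟩, hy0, hytr⟩
      rw [hc, mul_inv_cancel_left₀ hβsq]
  rw [hset]
  -- cardinalities
  have hqcard : Nat.card (F ⧸ LinearMap.ker φ) = 4 := by
    rw [Nat.card_congr (LinearMap.quotKerEquivOfSurjective φ hsurj).toEquiv,
      Nat.card_prod, Nat.card_zmod]
  have hker : 2 ^ m = 4 * Nat.card (LinearMap.ker φ) := by
    rw [← hcard, ← Nat.card_eq_fintype_card,
      Submodule.card_eq_card_quotient_mul_card (LinearMap.ker φ), hqcard]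
    ring
  have hkercoe : Nat.card (LinearMap.ker φ) = ((LinearMap.ker φ : Set F)).ncard := by
    rw [← Nat.card_coe_set_eq]; rfl
  rw [Nat.card_coe_set_eq,
    Set.ncard_diff_singleton_of_mem (Submodule.zero_mem _), ← hkercoe]
  omega
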